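/- arXiv:1104.3900 — 2 statements merged into one kernel-verified Lean document; each statement's English description precedes it below -/
import Mathlib

section
/- There exist positive real constants c_1, c_2 and a threshold K such that for all natural numbers k ≥ K, the number of triples (x_1, x_2, x_3) ∈ ℤ^3 with x_1 ≤ x_2 ≤ x_3, F_3(x) = 0 and x_1^2 + x_2^2 + x_3^2 ≤ k^2 lies between c_1·k and c_2·k; the same holds (possibly with different constants) for the number of 3-color fair games (x_1, x_2, x_3) with x_1 ≤ x_2 ≤ x_3 and x_1^2 + x_2^2 + x_3^2 ≤ k^2. That is, |S_3(k)| = Θ(k) and |F_3(k)| = Θ(k). -/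
set_option maxHeartbeats 1600000

def F3 (x y z : ℤ) : ℤ :=
  (x + y + z) ^ 2 - (x + y + z) - 4 * (x * y + y * z + z * x)

lemma key3 (x y z : ℤ) :
    4 * F3 x y z = (2*z - 2*x - 2*y - 1)^2 - ((4*x+2)*(4*y+2) - 3) := by
  unfold F3; ring


lemma sum_inv_sq_range (n : ℕ) :
    ∑ q ∈ Finset.range n, (1:ℚ)/((q+1)^2) ≤ 2 - 2/((n:ℚ)+1) := by
  induction n with
  | zero => simp
  | succ n ih =>
    rw [Finset.sum_range_succ]
    have h1 : (0:ℚ) < (n:ℚ) + 1 := by positivity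
    have h2 : (0:ℚ) < (n:ℚ) + 2 := by positivity
    have h3 : (1:ℚ)/(((n:ℚ)+1)^2) ≤ 2/((n:ℚ)+1) - 2/((n:ℚ)+2) := by
      rw [div_sub_div _ _ (ne_of_gt h1) (ne_of_gt h2), div_le_div_iff₀ (by positivity) (by positivity)]
      nlinarith [sq_nonneg ((n:ℚ)+1)]
    have h4 : ((n+1 : ℕ) : ℚ) + 1 = (n:ℚ) + 2 := by push_cast; ring
    rw [h4]
    push_cast
    linarith

lemma sum_inv_sq_range' (n : ℕ) :
    ∑ q ∈ Finset.range n, (1:ℚ)/((q+1)^2) ≤ 2 := by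
  have h := sum_inv_sq_range n
  have h2 : (0:ℚ) ≤ 2/((n:ℚ)+1) := by positivity
  linarith

lemma sum_inv_sq_Icc3 (N : ℕ) (hN : 2 ≤ N) :
    ∑ d ∈ Finset.Icc 3 N, (1:ℚ)/((d:ℚ)^2) ≤ 4/9 - (4/3)/((N:ℚ)+1) := by
  induction N, hN using Nat.le_induction with
  | base => norm_num
  | succ N hN ih =>
    rw [Finset.sum_Icc_succ_top (by omega)]
    have h1 : (0:ℚ) < (N:ℚ) + 1 := by positivity
    have h2 : (0:ℚ) < (N:ℚ) + 2 := by positivity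
    have h3 : (1:ℚ)/(((N:ℚ)+1)^2) ≤ (4/3)/((N:ℚ)+1) - (4/3)/((N:ℚ)+2) := by
      rw [div_sub_div _ _ (ne_of_gt h1) (ne_of_gt h2), div_le_div_iff₀ (by positivity) (by positivity)]
      have : (2:ℚ) ≤ (N:ℚ) := by exact_mod_cast hN
      nlinarith [sq_nonneg ((N:ℚ)+1)]
    have h4 : ((N+1 : ℕ) : ℚ) = (N:ℚ) + 1 := by push_cast; ring
    rw [h4]
    have : ((N:ℚ)+1) + 1 = (N:ℚ) + 2 := by ring
    rw [this]
    linarith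

lemma sum_inv_sq_Icc2 (N : ℕ) :
    ∑ d ∈ Finset.Icc 2 N, (1:ℚ)/((d:ℚ)^2) ≤ 25/36 := by
  rcases lt_or_ge N 2 with h | h
  · rw [Finset.Icc_eq_empty (by omega)]; norm_num
  · have hins : Finset.Icc 2 N = insert 2 (Finset.Icc 3 N) := by
      rw [← Finset.Ioc_insert_left (by omega)]
      congr 1
    rw [hins, Finset.sum_insert (by simp)]
    have h3 := sum_inv_sq_Icc3 N h
    have h4 : (0:ℚ) ≤ (4/3)/((N:ℚ)+1) := by positivity
    have h5 : (1:ℚ)/(((2:ℕ):ℚ)^2) = 1/4 := by norm_num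
    rw [h5]
    linarith

lemma rep_exists : ∀ v : ℕ, 1 ≤ v → ∀ j : ℤ, (v:ℤ) ∣ j^2+j+1 →
    ∃ p : ℤ × ℤ, IsCoprime p.1 p.2 ∧ p.1^2 + p.1*p.2 + p.2^2 = (v:ℤ) ∧ (v:ℤ) ∣ j*p.2 - p.1 := by
  intro v
  induction v using Nat.strong_induction_on with
  | _ v ih =>
    intro hv j hj
    rcases eq_or_lt_of_le hv with h1 | h2
    · refine ⟨(1,0), isCoprime_one_left, ?_, ?_⟩ <;> simp [← h1]
    · -- v ≥ 2
      have hvpos : (0:ℤ) < (v:ℤ) := by exact_mod_cast Nat.lt_of_lt_of_le Nat.zero_lt_one hv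
      set r : ℤ := j % (v:ℤ) with hrdef
      have hr0 : 0 ≤ r := Int.emod_nonneg j (ne_of_gt hvpos)
      have hrv : r < (v:ℤ) := Int.emod_lt_of_pos j hvpos
      have hjr : (v:ℤ) ∣ j - r := Int.dvd_self_sub_of_emod_eq rfl
      set j' : ℤ := if 2*r+1 ≤ (v:ℤ) then r else r - v with hj'def
      have hjj' : (v:ℤ) ∣ j - j' := by
        rw [hj'def]; split
        · exact hjr
        · have h : j - (r - (v:ℤ)) = (j - r) + v := by ring
          rw [h]; exact dvd_add hjr (dvd_refl _)
      have hbound : (2*j'+1)^2 ≤ (v:ℤ)^2 := by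
        rw [hj'def]; split <;> rename_i h <;> nlinarith
      have hdvd' : (v:ℤ) ∣ j'^2+j'+1 := by
        have h1 : j^2+j+1 - (j'^2+j'+1) = (j-j')*(j+j'+1) := by ring
        have h2 : (v:ℤ) ∣ j^2+j+1 - (j'^2+j'+1) := h1 ▸ Dvd.dvd.mul_right hjj' _
        have h3 : j'^2+j'+1 = (j^2+j+1) - ((j^2+j+1) - (j'^2+j'+1)) := by ring
        rw [h3]; exact dvd_sub hj h2
      obtain ⟨w', hw'⟩ := hdvd'
      have hw'pos : 1 ≤ w' := by nlinarith [sq_nonneg (2*j'+1)]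
      have hlt : w' < (v:ℤ) := by nlinarith
      have hw'dvd : ((w'.toNat : ℤ)) ∣ j'^2+j'+1 := by
        rw [Int.toNat_of_nonneg (by omega)]; exact ⟨v, by rw [hw']; ring⟩
      obtain ⟨⟨a₀, b₀⟩, hcop₀, hnorm₀, hdvd₀⟩ :=
        ih w'.toNat (by omega) (by omega) j' hw'dvd
      simp only at hcop₀ hnorm₀ hdvd₀
      rw [Int.toNat_of_nonneg (by omega)] at hnorm₀ hdvd₀
      set A : ℤ := (a₀+b₀)*j' + b₀ with hAdef
      set B : ℤ := a₀ - b₀*j' with hBdef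
      have hBd : w' ∣ B := by
        have : B = -(j'*b₀ - a₀) := by rw [hBdef]; ring
        rw [this]; exact dvd_neg.mpr hdvd₀
      have hAd : w' ∣ A := by
        have h1 : A = j'*B + b₀*(j'^2+j'+1) := by rw [hAdef, hBdef]; ring
        have h2 : w' ∣ j'^2+j'+1 := ⟨v, by rw [hw']; ring⟩
        rw [h1]; exact dvd_add (Dvd.dvd.mul_left hBd _) (Dvd.dvd.mul_left h2 _)
      obtain ⟨a, ha⟩ := hAd
      obtain ⟨b, hb⟩ := hBd
      have hw'ne : w' ≠ 0 := by omega
      have hid1 : A^2 + A*B + B^2 = (a₀^2+a₀*b₀+b₀^2) * (j'^2+j'+1) := by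
        rw [hAdef, hBdef]; ring
      have hnorm : a^2 + a*b + b^2 = (v:ℤ) := by
        have h1 : w'^2 * (a^2+a*b+b^2) = w'^2 * (v:ℤ) := by
          have : A^2+A*B+B^2 = w' * ((v:ℤ)*w') := by rw [hid1, hnorm₀, hw']
          rw [ha, hb] at this; linear_combination this
        exact mul_left_cancel₀ (pow_ne_zero 2 hw'ne) h1
      have hcop : IsCoprime a b := by
        have h1 : w' * (b₀ * a + (a₀+b₀) * b) = w' * 1 := by
          have : b₀ * A + (a₀+b₀) * B = a₀^2+a₀*b₀+b₀^2 := by rw [hAdef, hBdef]; ring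
          rw [ha, hb] at this; linear_combination this + hnorm₀
        have h2 := mul_left_cancel₀ hw'ne h1
        exact ⟨b₀, a₀+b₀, by linarith⟩
      have hdvd2 : (v:ℤ) ∣ j*b - a := by
        have h1 : j'*B - A = -b₀*(j'^2+j'+1) := by rw [hAdef, hBdef]; ring
        have h2 : w' * (j'*b - a) = w' * (-b₀*(v:ℤ)) := by
          rw [hw', ha, hb] at h1; linear_combination h1
        have h3 : j'*b - a = -b₀*(v:ℤ) := mul_left_cancel₀ hw'ne h2
        have h4 : (v:ℤ) ∣ j'*b - a := ⟨-b₀, by linarith⟩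
        have h5 : (v:ℤ) ∣ (j - j')*b := Dvd.dvd.mul_right hjj' _
        have : j*b - a = (j-j')*b + (j'*b - a) := by ring
        rw [this]; exact dvd_add h5 h4
      exact ⟨(a, b), hcop, hnorm, hdvd2⟩

lemma sub_sq_aux (v : ℕ) (h2v : 2 ≤ v) : (v-2)*(v-2) + 4*v ≤ v*v + 4 := by
  rcases Nat.exists_eq_add_of_le h2v with ⟨u, hu⟩
  subst hu
  have hsub : 2 + u - 2 = u := by omega
  rw [hsub]
  nlinarith

def vOf (p : ℕ × ℕ) : ℕ := p.1^2 + p.1*p.2 + p.2^2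
def rOf (p : ℕ × ℕ) : ℕ := ((p.1 : ZMod (vOf p)) * (p.2 : ZMod (vOf p))⁻¹).val
def wOf (p : ℕ × ℕ) : ℕ := ((rOf p)^2 + rOf p + 1)/(vOf p)

def Tmap (p : ℕ × ℕ) : ℤ × ℤ × ℤ :=
  ((((wOf p - 1)/2 : ℕ) : ℤ), (((vOf p - 1)/2 : ℕ) : ℤ),
    (((vOf p - 1)/2 + (wOf p - 1)/2 + rOf p + 1 : ℕ) : ℤ))

lemma lower_facts (a b : ℕ) (ha : 1 ≤ a) (hb : 1 ≤ b) (hab : Nat.Coprime a b) :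
    3 ≤ vOf (a,b) ∧ rOf (a,b) < vOf (a,b) ∧
    (vOf (a,b)) * (wOf (a,b)) = (rOf (a,b))^2 + rOf (a,b) + 1 ∧
    1 ≤ wOf (a,b) ∧ wOf (a,b) ≤ vOf (a,b) ∧ vOf (a,b) % 2 = 1 ∧ wOf (a,b) % 2 = 1 ∧
    b * rOf (a,b) ≡ a [MOD vOf (a,b)] := by
  set v := vOf (a,b) with hvdef
  have hv : v = a^2 + a*b + b^2 := rfl
  have hv3 : 3 ≤ v := by
    have h1 : 1 ≤ a^2 := Nat.one_le_pow _ _ ha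
    have h2 : 1 ≤ b^2 := Nat.one_le_pow _ _ hb
    have h3 : 1 ≤ a*b := Nat.one_le_iff_ne_zero.mpr (by positivity)
    omega
  haveI : NeZero v := ⟨by omega⟩
  have hvodd : v % 2 = 1 := by
    rcases Nat.even_or_odd a with ⟨s, hs⟩ | ⟨s, hs⟩ <;>
      rcases Nat.even_or_odd b with ⟨t, ht⟩ | ⟨t, ht⟩
    · exfalso
      have h2 : 2 ∣ Nat.gcd a b := Nat.dvd_gcd ⟨s, by omega⟩ ⟨t, by omega⟩
      rw [hab] at h2; omega
    · have : v = 2*(2*s^2 + 2*s*t + s + 2*t^2 + 2*t) + 1 := by rw [hv, hs, ht]; ring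
      omega
    · have : v = 2*(2*s^2 + 2*s*t + t + 2*t^2 + 2*s) + 1 := by rw [hv, hs, ht]; ring
      omega
    · have : v = 2*(2*s^2 + 2*s + 2*s*t + s + t + 2*t^2 + 2*t + 1) + 1 := by
        rw [hv, hs, ht]; ring
      omega
  have hcb : Nat.Coprime b v := by
    have h1 : Nat.Coprime b (a^2) := (Nat.Coprime.pow_right 2 hab.symm)
    have h2 : v = a^2 + (a*b + b^2) := by rw [hv]; ring
    have h3 : Nat.gcd b v ∣ a^2 := by
      have hd1 : Nat.gcd b v ∣ v := Nat.gcd_dvd_right b v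
      have hd2 : Nat.gcd b v ∣ a*b + b^2 := by
        have hdb : Nat.gcd b v ∣ b := Nat.gcd_dvd_left b v
        exact dvd_add (Dvd.dvd.mul_left hdb a) (by rw [pow_two]; exact Dvd.dvd.mul_left hdb b)
      have h6 := Nat.dvd_sub hd1 hd2
      have h5 : v - (a*b + b^2) = a^2 := by omega
      rwa [h5] at h6
    have h4 : Nat.gcd b v ∣ Nat.gcd b (a^2) := Nat.dvd_gcd (Nat.gcd_dvd_left b v) h3
    rw [h1] at h4
    exact Nat.dvd_one.mp h4
  set r := rOf (a,b) with hrdef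
  have hrlt : r < v := ZMod.val_lt _
  have hr : b * r ≡ a [MOD v] := by
    have h1 : ((b * r : ℕ) : ZMod v) = ((a : ℕ) : ZMod v) := by
      push_cast [hrdef, rOf]
      rw [ZMod.natCast_val, ZMod.cast_id]
      rw [show ((b : ZMod v) * ((a : ZMod v) * (b : ZMod v)⁻¹)) =
        ((a : ZMod v) * ((b : ZMod v) * (b : ZMod v)⁻¹)) by ring]
      rw [ZMod.coe_mul_inv_eq_one b hcb, mul_one]
    exact (ZMod.natCast_eq_natCast_iff _ _ _).mp h1
  have hdvd : v ∣ r^2 + r + 1 := by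
    have h1 : b*r*(b*r) ≡ a*a [MOD v] := hr.mul hr
    have h2 : b*r*b ≡ a*b [MOD v] := hr.mul_right b
    have h3 : b*r*(b*r) + b*r*b + b*b ≡ a*a + a*b + b*b [MOD v] :=
      (h1.add h2).add (Nat.ModEq.refl (b*b))
    have e1 : (r^2+r+1)*b^2 = b*r*(b*r) + b*r*b + b*b := by ring
    have e2 : a*a + a*b + b*b = v := by rw [hv]; ring
    have h4 : (r^2+r+1)*b^2 ≡ a*a + a*b + b*b [MOD v] := by rw [e1]; exact h3
    have h6 : a*a + a*b + b*b ≡ 0 [MOD v] :=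
      Nat.modEq_zero_iff_dvd.mpr (e2 ▸ dvd_rfl)
    have h5 : v ∣ (r^2+r+1)*b^2 := (Nat.modEq_zero_iff_dvd).mp (h4.trans h6)
    exact Nat.Coprime.dvd_of_dvd_mul_right (hcb.symm.pow_right 2) h5
  set w := wOf (a,b) with hwdef
  have hvw : v * w = r^2 + r + 1 := Nat.mul_div_cancel' hdvd
  have hw1 : 1 ≤ w := by
    rcases Nat.eq_zero_or_pos w with h | h
    · rw [h, Nat.mul_zero] at hvw; omega
    · exact h
  have hwv : w ≤ v := by
    have h1 : v * w ≤ v * v := by nlinarith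
    exact Nat.le_of_mul_le_mul_left h1 (by omega)
  have hwodd : w % 2 = 1 := by
    have h1 : (r^2 + r + 1) % 2 = 1 := by
      have : Even (r^2 + r) := by
        have := Nat.even_mul_succ_self r
        have e : r * (r+1) = r^2 + r := by ring
        rwa [e] at this
      obtain ⟨c, hc⟩ := this; omega
    rw [← hvw] at h1
    rcases Nat.even_or_odd w with ⟨c, hc⟩ | ⟨c, hc⟩
    · exfalso; rw [hc] at h1
      have : v * (c + c) = 2*(v*c) := by ring
      omega
    · omega
  exact ⟨hv3, hrlt, hvw, hw1, hwv, hvodd, hwodd, hr⟩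

lemma Tmap_spec (a b : ℕ) (ha : 1 ≤ a) (hb : 1 ≤ b) (hab : Nat.Coprime a b) :
    (0:ℤ) ≤ (Tmap (a,b)).1 ∧ (Tmap (a,b)).1 ≤ (Tmap (a,b)).2.1 ∧
    (Tmap (a,b)).2.1 ≤ (Tmap (a,b)).2.2 ∧
    F3 (Tmap (a,b)).1 (Tmap (a,b)).2.1 (Tmap (a,b)).2.2 = 0 ∧
    (Tmap (a,b)).1^2 + (Tmap (a,b)).2.1^2 + (Tmap (a,b)).2.2^2 ≤ 6*((vOf (a,b) : ℤ))^2 := by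
  obtain ⟨hv3, hrlt, hvw, hw1, hwv, hvodd, hwodd, hr⟩ := lower_facts a b ha hb hab
  set v := vOf (a,b) with hvdef
  set r := rOf (a,b) with hrdef
  set w := wOf (a,b) with hwdef
  set x := (v-1)/2 with hxdef
  set y := (w-1)/2 with hydef
  set z := x + y + r + 1 with hzdef
  have hT : Tmap (a,b) = ((y:ℤ), (x:ℤ), (z:ℤ)) := rfl
  have h2x : 2*x + 1 = v := by omega
  have h2y : 2*y + 1 = w := by omega
  have hX : 2*(x:ℤ) + 1 = (v:ℤ) := by exact_mod_cast h2x
  have hY : 2*(y:ℤ) + 1 = (w:ℤ) := by exact_mod_cast h2y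
  have hZ : (z:ℤ) = (x:ℤ) + (y:ℤ) + (r:ℤ) + 1 := by rw [hzdef]; push_cast; ring
  have hvw' : (v:ℤ)*(w:ℤ) = (r:ℤ)^2 + (r:ℤ) + 1 := by exact_mod_cast hvw
  rw [hT]
  simp only
  refine ⟨by positivity, ?_, ?_, ?_, ?_⟩
  · have : y ≤ x := by omega
    exact_mod_cast this
  · have : x ≤ z := by omega
    exact_mod_cast this
  · have h4 : 4 * F3 (y:ℤ) (x:ℤ) (z:ℤ) = 0 := by
      rw [key3 (y:ℤ) (x:ℤ) (z:ℤ)]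
      have e : ((4*(y:ℤ)+2)*(4*(x:ℤ)+2)) = 4*((r:ℤ)^2+(r:ℤ)+1) := by
        linear_combination (4*(2*(x:ℤ)+1))*hY + (4*(w:ℤ))*hX + 4*hvw'
      rw [e, hZ]; ring
    linarith
  · have hxv : x ≤ v := by omega
    have hyv : y ≤ v := by omega
    have hzv : z ≤ 2*v := by omega
    have hn : y^2 + x^2 + z^2 ≤ 6*v^2 := by nlinarith
    exact_mod_cast hn

lemma Tmap_inj (a b c d : ℕ) (ha : 1 ≤ a) (hb : 1 ≤ b) (hab : Nat.Coprime a b)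
    (hc : 1 ≤ c) (hd : 1 ≤ d) (hcd : Nat.Coprime c d)
    (heq : Tmap (a,b) = Tmap (c,d)) : (a, b) = (c, d) := by
  obtain ⟨hv3, hrlt, hvw, hw1, hwv, hvodd, hwodd, hr⟩ := lower_facts a b ha hb hab
  obtain ⟨hv3', hrlt', hvw', hw1', hwv', hvodd', hwodd', hr'⟩ := lower_facts c d hc hd hcd
  have h1 : (wOf (a,b) - 1)/2 = (wOf (c,d) - 1)/2 ∧ (vOf (a,b) - 1)/2 = (vOf (c,d) - 1)/2 ∧
      (vOf (a,b)-1)/2 + (wOf (a,b)-1)/2 + rOf (a,b) + 1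
        = (vOf (c,d)-1)/2 + (wOf (c,d)-1)/2 + rOf (c,d) + 1 := by
    unfold Tmap at heq
    simp only [Prod.mk.injEq] at heq
    refine ⟨?_, ?_, ?_⟩
    · exact_mod_cast heq.1
    · exact_mod_cast heq.2.1
    · exact_mod_cast heq.2.2
  have hww : wOf (a,b) = wOf (c,d) := by omega
  have hvv : vOf (a,b) = vOf (c,d) := by omega
  have hrr : rOf (a,b) = rOf (c,d) := by omega
  set v := vOf (a,b) with hvdef
  set r := rOf (a,b) with hrdef
  rw [← hvv, ← hrr] at hr'
  -- hr : b * r ≡ a [MOD v], hr' : d * r ≡ c [MOD v]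
  have m1 : b*r*d ≡ a*d [MOD v] := hr.mul_right d
  have m2 : d*r*b ≡ c*b [MOD v] := hr'.mul_right b
  have e : b*r*d = d*r*b := by ring
  have h2 : a*d ≡ c*b [MOD v] := (m1.symm.trans (e ▸ m2))
  have hva : v = a^2 + a*b + b^2 := rfl
  have hvc : v = c^2 + c*d + d^2 := by rw [hvv]; rfl
  have hab1 : 1 ≤ a*b := Nat.mul_le_mul ha hb
  have hcd1 : 1 ≤ c*d := Nat.mul_le_mul hc hd
  have hb2 : 1 ≤ b^2 := Nat.one_le_pow _ _ hb
  have hd2 : 1 ≤ d^2 := Nat.one_le_pow _ _ hd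
  have ha2 : 1 ≤ a^2 := Nat.one_le_pow _ _ ha
  have hc2 : 1 ≤ c^2 := Nat.one_le_pow _ _ hc
  have hA : a^2 + 2 ≤ v := by omega
  have hD : d^2 + 2 ≤ v := by omega
  have hC : c^2 + 2 ≤ v := by omega
  have hB : b^2 + 2 ≤ v := by omega
  have had : a*d < v := by
    by_contra hcon
    push_neg at hcon
    have e1 : (a*d)^2 = a^2 * d^2 := by ring
    have e2 : v*v ≤ (a*d)*(a*d) := Nat.mul_le_mul hcon hcon
    have e3 : a^2*d^2 ≤ (v-2)*(v-2) := Nat.mul_le_mul (by omega) (by omega)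
    have e4 : (a*d)*(a*d) = a^2*d^2 := by ring
    have e5 : (v-2)*(v-2) + 4*v ≤ v*v + 4 := sub_sq_aux v (by omega)
    omega
  have hcb : c*b < v := by
    by_contra hcon
    push_neg at hcon
    have e2 : v*v ≤ (c*b)*(c*b) := Nat.mul_le_mul hcon hcon
    have e3 : c^2*b^2 ≤ (v-2)*(v-2) := Nat.mul_le_mul (by omega) (by omega)
    have e4 : (c*b)*(c*b) = c^2*b^2 := by ring
    have e5 : (v-2)*(v-2) + 4*v ≤ v*v + 4 := sub_sq_aux v (by omega)
    omega
  have heq2 : a*d = c*b := Nat.ModEq.eq_of_lt_of_lt h2 had hcb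
  have hac : a = c := by
    have d1 : a ∣ c*b := ⟨d, heq2.symm⟩
    have d2 : c ∣ a*d := ⟨b, heq2⟩
    exact Nat.dvd_antisymm (Nat.Coprime.dvd_of_dvd_mul_right hab d1)
      (Nat.Coprime.dvd_of_dvd_mul_right hcd d2)
  have hbd : b = d := by
    rw [hac] at heq2
    have : c*d = c*b := heq2
    exact (Nat.eq_of_mul_eq_mul_left (by omega) this).symm
  rw [hac, hbd]

lemma coprime_count (N : ℕ) :
    11 * N^2 ≤ 36 * (((Finset.Icc 1 N) ×ˢ (Finset.Icc 1 N)).filter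
      (fun p => Nat.gcd p.1 p.2 = 1)).card := by
  classical
  set P := (Finset.Icc 1 N) ×ˢ (Finset.Icc 1 N) with hPdef
  have hPcard : P.card = N^2 := by
    rw [hPdef, Finset.card_product, Nat.card_Icc]
    have : N + 1 - 1 = N := by omega
    rw [this]
    ring
  set G := P.filter (fun p => Nat.gcd p.1 p.2 = 1) with hGdef
  set B := P.filter (fun p => ¬ Nat.gcd p.1 p.2 = 1) with hBdef
  have hGB : G.card + B.card = N^2 := by
    rw [hGdef, hBdef, Finset.card_filter_add_card_filter_not, hPcard]
  have hBsub : B ⊆ (Finset.Icc 2 N).biUnion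
      (fun d => P.filter (fun p => d ∣ p.1 ∧ d ∣ p.2)) := by
    intro p hp
    rw [hBdef, Finset.mem_filter] at hp
    obtain ⟨hpP, hg⟩ := hp
    have hp1 : p.1 ∈ Finset.Icc 1 N ∧ p.2 ∈ Finset.Icc 1 N := by
      rw [hPdef, Finset.mem_product] at hpP; exact hpP
    rw [Finset.mem_Icc, Finset.mem_Icc] at hp1
    obtain ⟨⟨h11, h12⟩, h21, h22⟩ := hp1
    rw [Finset.mem_biUnion]
    refine ⟨Nat.gcd p.1 p.2, ?_, ?_⟩
    · rw [Finset.mem_Icc]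
      constructor
      · rcases Nat.lt_or_ge (Nat.gcd p.1 p.2) 2 with h | h
        · exfalso
          have hg0 : Nat.gcd p.1 p.2 ≠ 0 := by
            intro h0
            have := Nat.eq_zero_of_gcd_eq_zero_left h0
            omega
          omega
        · exact h
      · exact le_trans (Nat.le_of_dvd (by omega) (Nat.gcd_dvd_left _ _)) h12
    · rw [Finset.mem_filter]
      exact ⟨hpP, Nat.gcd_dvd_left _ _, Nat.gcd_dvd_right _ _⟩
  have hPd : ∀ d : ℕ, (P.filter (fun p => d ∣ p.1 ∧ d ∣ p.2)).card = (N/d)^2 := by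
    intro d
    rw [hPdef, Finset.filter_product, Finset.card_product]
    have h1 : Finset.Icc 1 N = Finset.Ioc 0 N := rfl
    rw [h1, Nat.Ioc_filter_dvd_card_eq_div]
    ring
  have hBle : B.card ≤ ∑ d ∈ Finset.Icc 2 N, (N/d)^2 := by
    calc B.card ≤ ((Finset.Icc 2 N).biUnion
        (fun d => P.filter (fun p => d ∣ p.1 ∧ d ∣ p.2))).card := Finset.card_le_card hBsub
    _ ≤ ∑ d ∈ Finset.Icc 2 N, (P.filter (fun p => d ∣ p.1 ∧ d ∣ p.2)).card :=
        Finset.card_biUnion_le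
    _ = ∑ d ∈ Finset.Icc 2 N, (N/d)^2 := by simp_rw [hPd]
  have hQ : ((∑ d ∈ Finset.Icc 2 N, (N/d)^2 : ℕ) : ℚ) ≤ 25/36 * (N:ℚ)^2 := by
    push_cast
    have h1 : ∀ d ∈ Finset.Icc 2 N, ((N/d : ℕ) : ℚ)^2 ≤ (N:ℚ)^2 * (1/(d:ℚ)^2) := by
      intro d hd
      rw [Finset.mem_Icc] at hd
      have hd0 : (0:ℚ) < (d:ℚ) := by exact_mod_cast Nat.lt_of_lt_of_le Nat.zero_lt_two hd.1
      have h2 : ((N/d : ℕ) : ℚ) ≤ (N:ℚ)/(d:ℚ) := Nat.cast_div_le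
      have h3 : (0:ℚ) ≤ ((N/d : ℕ) : ℚ) := Nat.cast_nonneg _
      calc ((N/d : ℕ) : ℚ)^2 ≤ ((N:ℚ)/(d:ℚ))^2 := by
            apply pow_le_pow_left₀ h3 h2
      _ = (N:ℚ)^2 * (1/(d:ℚ)^2) := by rw [div_pow]; ring
    calc ∑ d ∈ Finset.Icc 2 N, ((N/d : ℕ) : ℚ)^2
        ≤ ∑ d ∈ Finset.Icc 2 N, (N:ℚ)^2 * (1/(d:ℚ)^2) := Finset.sum_le_sum h1
    _ = (N:ℚ)^2 * ∑ d ∈ Finset.Icc 2 N, (1:ℚ)/((d:ℚ)^2) := by rw [Finset.mul_sum]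
    _ ≤ (N:ℚ)^2 * (25/36) := by
        apply mul_le_mul_of_nonneg_left (sum_inv_sq_Icc2 N) (by positivity)
    _ = 25/36 * (N:ℚ)^2 := by ring
  have hB36 : 36 * B.card ≤ 25 * N^2 := by
    have h1 : (36 * B.card : ℚ) ≤ 25 * (N:ℚ)^2 := by
      have h2 : (B.card : ℚ) ≤ 25/36 * (N:ℚ)^2 := le_trans (by exact_mod_cast hBle) hQ
      linarith
    exact_mod_cast h1
  omega

lemma sol_finite (k : ℕ) (S : Set (ℤ×ℤ×ℤ))
    (hS : ∀ p ∈ S, p.1^2 + p.2.1^2 + p.2.2^2 ≤ (k:ℤ)^2) : S.Finite := by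
  apply Set.Finite.subset (Finset.finite_toSet
    ((Finset.Icc (-(k:ℤ)) k) ×ˢ (Finset.Icc (-(k:ℤ)) k) ×ˢ (Finset.Icc (-(k:ℤ)) k)))
  intro p hp
  have h := hS p hp
  simp only [Finset.coe_product, Set.mem_prod, Finset.mem_coe, Finset.mem_Icc]
  have h1 : p.1^2 ≤ (k:ℤ)^2 := by nlinarith [sq_nonneg p.2.1, sq_nonneg p.2.2]
  have h2 : p.2.1^2 ≤ (k:ℤ)^2 := by nlinarith [sq_nonneg p.1, sq_nonneg p.2.2]
  have h3 : p.2.2^2 ≤ (k:ℤ)^2 := by nlinarith [sq_nonneg p.1, sq_nonneg p.2.1]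
  have hk : (0:ℤ) ≤ k := Int.natCast_nonneg k
  refine ⟨⟨?_, ?_⟩, ⟨?_, ?_⟩, ⟨?_, ?_⟩⟩ <;> nlinarith

lemma lower_bound (k : ℕ) (hk : 6400 ≤ k) :
    k ≤ 1600 * {x : ℤ×ℤ×ℤ | 0 ≤ x.1 ∧ x.1 ≤ x.2.1 ∧ x.2.1 ≤ x.2.2 ∧
      F3 x.1 x.2.1 x.2.2 = 0 ∧ x.1^2+x.2.1^2+x.2.2^2 ≤ (k:ℤ)^2}.ncard := by
  classical
  set S := {x : ℤ×ℤ×ℤ | 0 ≤ x.1 ∧ x.1 ≤ x.2.1 ∧ x.2.1 ≤ x.2.2 ∧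
      F3 x.1 x.2.1 x.2.2 = 0 ∧ x.1^2+x.2.1^2+x.2.2^2 ≤ (k:ℤ)^2} with hSdef
  have hfin : S.Finite := sol_finite k S (fun p hp => hp.2.2.2.2)
  set N := Nat.sqrt k / 10 with hNdef
  have hs10 : 10 * N ≤ Nat.sqrt k := by omega
  have h100 : 100 * N^2 ≤ k := by
    have h1 : (10*N) * (10*N) ≤ Nat.sqrt k * Nat.sqrt k := Nat.mul_le_mul hs10 hs10
    have h2 : Nat.sqrt k * Nat.sqrt k ≤ k := by
      have := Nat.sqrt_le' k
      nlinarith [this]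
    nlinarith
  have hN8 : 8 ≤ N := by
    have h1 : 80 ≤ Nat.sqrt k := by
      have : 80 * 80 ≤ k := by omega
      exact (Nat.le_sqrt.mpr this)
    omega
  have hNup : k < 400 * N^2 := by
    have h1 : k < (Nat.sqrt k + 1) * (Nat.sqrt k + 1) := Nat.lt_succ_sqrt k
    have h2 : Nat.sqrt k + 1 ≤ 10*N + 10 := by omega
    have h3 : k < (10*N+10) * (10*N+10) :=
      lt_of_lt_of_le h1 (Nat.mul_le_mul h2 h2)
    nlinarith
  set D := ((Finset.Icc 1 N) ×ˢ (Finset.Icc 1 N)).filter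
      (fun p => Nat.gcd p.1 p.2 = 1) with hDdef
  have hDmem : ∀ p ∈ D, 1 ≤ p.1 ∧ p.1 ≤ N ∧ 1 ≤ p.2 ∧ p.2 ≤ N ∧ Nat.Coprime p.1 p.2 := by
    intro p hp
    rw [hDdef, Finset.mem_filter, Finset.mem_product, Finset.mem_Icc, Finset.mem_Icc] at hp
    exact ⟨hp.1.1.1, hp.1.1.2, hp.1.2.1, hp.1.2.2, hp.2⟩
  have himg : ∀ p ∈ D, Tmap p ∈ S := by
    intro p hp
    obtain ⟨h1, h2, h3, h4, h5⟩ := hDmem p hp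
    obtain ⟨s1, s2, s3, s4, s5⟩ := Tmap_spec p.1 p.2 h1 h3 h5
    have hvN : vOf p ≤ 3 * N^2 := by
      have : vOf p = p.1^2 + p.1*p.2 + p.2^2 := rfl
      nlinarith [this]
    have hnorm : (Tmap p).1^2 + (Tmap p).2.1^2 + (Tmap p).2.2^2 ≤ (k:ℤ)^2 := by
      have hv : ((vOf p : ℤ)) ≤ 3 * (N:ℤ)^2 := by exact_mod_cast hvN
      have hkN : 100 * (N:ℤ)^2 ≤ (k:ℤ) := by exact_mod_cast h100
      have hv0 : (0:ℤ) ≤ (vOf p : ℤ) := Int.natCast_nonneg _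
      have hN0 : (0:ℤ) ≤ (N:ℤ) := Int.natCast_nonneg _
      nlinarith [s5]
    rw [hSdef]
    refine ⟨s1, s2, s3, ?_, hnorm⟩
    have : p = (p.1, p.2) := rfl
    rw [this] at s4 ⊢
    exact s4
  have hinj : Set.InjOn Tmap ↑D := by
    intro p hp q hq heq
    simp only [Finset.mem_coe] at hp hq
    obtain ⟨h1, h2, h3, h4, h5⟩ := hDmem p hp
    obtain ⟨g1, g2, g3, g4, g5⟩ := hDmem q hq
    have hp' : p = (p.1, p.2) := rfl
    have hq' : q = (q.1, q.2) := rfl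
    rw [hp', hq']
    apply Tmap_inj p.1 p.2 q.1 q.2 h1 h3 h5 g1 g3 g5
    rw [← hp', ← hq']; exact heq
  have hcard1 : (D.image Tmap).card = D.card := Finset.card_image_of_injOn hinj
  have hsub : ↑(D.image Tmap) ⊆ S := by
    intro x hx
    simp only [Finset.coe_image, Set.mem_image, Finset.mem_coe] at hx
    obtain ⟨p, hp, hpx⟩ := hx
    exact hpx ▸ himg p hp
  have hnle : D.card ≤ S.ncard := by
    rw [← hcard1, ← Set.ncard_coe_finset]
    exact Set.ncard_le_ncard hsub hfin
  have hcc : 11 * N^2 ≤ 36 * D.card := by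
    rw [hDdef]; exact coprime_count N
  omega

noncomputable def repF (v : ℕ) (t : ℤ) : ℤ × ℤ :=
  if h : 1 ≤ v ∧ (v:ℤ) ∣ t^2+t+1 then (rep_exists v h.1 t h.2).choose else (1, 0)

lemma repF_spec (v : ℕ) (t : ℤ) (h1 : 1 ≤ v) (h2 : (v:ℤ) ∣ t^2+t+1) :
    IsCoprime (repF v t).1 (repF v t).2 ∧
    (repF v t).1^2 + (repF v t).1*(repF v t).2 + (repF v t).2^2 = (v:ℤ) ∧
    (v:ℤ) ∣ t*(repF v t).2 - (repF v t).1 := by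
  rw [repF, dif_pos (⟨h1, h2⟩ : 1 ≤ v ∧ (v:ℤ) ∣ t^2+t+1)]
  exact (rep_exists v h1 t h2).choose_spec

def vSel (p : ℤ×ℤ×ℤ) : ℤ := if 0 ≤ p.1 then 2*p.1+1 else -(2*p.2.1+1)
def jSel (p : ℤ×ℤ×ℤ) : ℤ := p.2.2 - p.1 - p.2.1 - 1

noncomputable def Phi (p : ℤ×ℤ×ℤ) : ℤ×ℤ×ℤ×ℤ :=
  ((repF (vSel p).toNat (jSel p % vSel p)).1,
   (repF (vSel p).toNat (jSel p % vSel p)).2,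
   jSel p / vSel p,
   if 0 ≤ p.1 then 0 else 1)

lemma sol_struct (k : ℕ) (p : ℤ×ℤ×ℤ)
    (h1 : p.1 ≤ p.2.1) (h2 : p.2.1 ≤ p.2.2) (h3 : F3 p.1 p.2.1 p.2.2 = 0)
    (h4 : p.1^2+p.2.1^2+p.2.2^2 ≤ (k:ℤ)^2) :
    ∃ w : ℤ, 1 ≤ vSel p ∧ vSel p ≤ w ∧ w ≤ 2*(k:ℤ)+1 ∧
      vSel p * w = (jSel p)^2 + jSel p + 1 ∧
      ((0 ≤ p.1 ∧ vSel p = 2*p.1+1 ∧ w = 2*p.2.1+1) ∨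
       (¬ 0 ≤ p.1 ∧ vSel p = -(2*p.2.1+1) ∧ w = -(2*p.1+1))) := by
  set x := p.1; set y := p.2.1; set z := p.2.2
  set j := jSel p with hjdef
  have hj : j = z - x - y - 1 := rfl
  have hkey := key3 x y z
  have hprod : (2*x+1)*(2*y+1) = j^2+j+1 := by
    have h4G : 4*((2*x+1)*(2*y+1)) = 4*(j^2+j+1) := by
      rw [hj]; linear_combination hkey - 4*h3
    exact mul_left_cancel₀ (by norm_num : (4:ℤ) ≠ 0) h4G
  have hjpos : (0:ℤ) < j^2+j+1 := by nlinarith [sq_nonneg (2*j+1)]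
  have hxk : x^2 ≤ (k:ℤ)^2 := by nlinarith [sq_nonneg y, sq_nonneg z]
  have hyk : y^2 ≤ (k:ℤ)^2 := by nlinarith [sq_nonneg x, sq_nonneg z]
  have hk0 : (0:ℤ) ≤ (k:ℤ) := Int.natCast_nonneg k
  have hxb : -(k:ℤ) ≤ x ∧ x ≤ (k:ℤ) := by constructor <;> nlinarith
  have hyb : -(k:ℤ) ≤ y ∧ y ≤ (k:ℤ) := by constructor <;> nlinarith
  by_cases hx : 0 ≤ x
  · have hv : vSel p = 2*x+1 := if_pos hx
    have hy1 : 0 < 2*y+1 := by nlinarith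
    refine ⟨2*y+1, ?_, ?_, ?_, ?_, Or.inl ⟨hx, hv, rfl⟩⟩
    · rw [hv]; omega
    · rw [hv]; omega
    · omega
    · rw [hv]; exact hprod
  · have hv : vSel p = -(2*y+1) := if_neg hx
    push_neg at hx
    have hy1 : 2*y+1 < 0 := by nlinarith
    refine ⟨-(2*x+1), ?_, ?_, ?_, ?_, Or.inr ⟨by omega, hv, rfl⟩⟩
    · rw [hv]; omega
    · rw [hv]; omega
    · omega
    · rw [hv]; linear_combination hprod

lemma natAbs_le_sqrt (c : ℤ) (n : ℕ) (h : c^2 ≤ (n:ℤ)) : c.natAbs ≤ Nat.sqrt n := by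
  have h1 : (c.natAbs : ℤ) * (c.natAbs : ℤ) = c * c := Int.natAbs_mul_self' c
  have h2 : c.natAbs * c.natAbs ≤ n := by
    have h3 : ((c.natAbs * c.natAbs : ℕ) : ℤ) ≤ (n:ℤ) := by
      rw [Nat.cast_mul, h1]; nlinarith
    exact_mod_cast h3
  exact Nat.le_sqrt'.mpr (by rw [pow_two]; exact h2)

noncomputable def USet (k L : ℕ) : Finset (ℤ×ℤ×ℤ×ℤ) :=
  ((Finset.Icc (-(L:ℤ)) L) ×ˢ (Finset.Icc (-(L:ℤ)) L) ×ˢ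
    (Finset.Icc (-((L:ℤ)+2)) ((L:ℤ)+2)) ×ˢ (Finset.Icc (0:ℤ) 1)).filter
    (fun t => ((t.2.2.1.natAbs : ℤ) - 1)^2 * (t.1^2 + t.2.1^2) ≤ 8*(k:ℤ)+4 ∧
      1 ≤ t.1^2 + t.2.1^2)

lemma qbound_helper (T v w kk J : ℤ) (hT : 1 ≤ T) (hv : 1 ≤ v) (hTv : T*v ≤ J)
    (hJ1 : 1 ≤ J) (hJsq : (2*J-1)^2 ≤ 4*(v*w)) (hw : w ≤ 2*kk+1) (hkk : 0 ≤ kk) :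
    T^2*v ≤ 4*kk+2 := by
  have e2 : v*w ≤ v*(2*kk+1) := mul_le_mul_of_nonneg_left hw (by omega)
  have hTv2 : (2*(T*v)-1)^2 ≤ (2*J-1)^2 := by
    nlinarith [mul_nonneg (sub_nonneg.mpr hTv) (by nlinarith : (0:ℤ) ≤ J + T*v - 1)]
  have hmul : (4*v)*(T^2*v) ≤ (4*v)*(2*kk+1+T) := by nlinarith
  have h5 : T^2*v ≤ 2*kk+1+T := le_of_mul_le_mul_left hmul (by omega)
  rcases eq_or_lt_of_le (by nlinarith : (1:ℤ) ≤ T*v) with h6 | h6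
  · have hT1 : T = 1 := by nlinarith [h6.symm]
    have hv1 : v = 1 := by nlinarith [h6.symm]
    rw [hT1, hv1]; norm_num; omega
  · have h2T : 2*T ≤ T^2*v := by nlinarith
    omega

lemma Jsq_helper (j J v w : ℤ) (hJ2 : J^2 = j^2) (hmj : -J ≤ j) (hvw : v*w = j^2+j+1) :
    (2*J-1)^2 ≤ 4*(v*w) := by nlinarith

lemma filter_helper1 (T v S kk : ℤ) (h : T^2*v ≤ 4*kk+2) (hS : S ≤ 2*v) (hS0 : 0 ≤ S) :
    T^2*S ≤ 8*kk+4 := by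
  nlinarith [mul_nonneg (sq_nonneg T) (sub_nonneg.mpr hS)]

lemma filter_helper2 (T v S kk : ℤ) (hT : T^2 ≤ 1) (hS : S ≤ 2*v) (hS0 : 0 ≤ S)
    (hv : v ≤ 2*kk+1) (hv1 : 1 ≤ v) (hkk : 0 ≤ kk) : T^2*S ≤ 8*kk+4 := by
  nlinarith [mul_nonneg (sub_nonneg.mpr hT) hS0]

lemma Tsq_le (T v kk : ℤ) (h : T^2*v ≤ 4*kk+2) (hv : 1 ≤ v) (hkk : 0 ≤ kk) :
    T^2 ≤ 8*kk+4 := by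
  nlinarith [mul_nonneg (sq_nonneg T) (sub_nonneg.mpr hv)]

lemma phi_mem (k : ℕ) (hk : 1 ≤ k) (p : ℤ×ℤ×ℤ)
    (h1 : p.1 ≤ p.2.1) (h2 : p.2.1 ≤ p.2.2) (h3 : F3 p.1 p.2.1 p.2.2 = 0)
    (h4 : p.1^2+p.2.1^2+p.2.2^2 ≤ (k:ℤ)^2) :
    Phi p ∈ USet k (Nat.sqrt (8*k+4)) := by
  obtain ⟨w, hv1, hvw', hw2k, hvw, hcase⟩ := sol_struct k p h1 h2 h3 h4
  set L := Nat.sqrt (8*k+4) with hLdef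
  set v := vSel p with hvdef
  set j := jSel p with hjdef
  have hvne : v ≠ 0 := by omega
  have hv0 : (0:ℤ) < v := by omega
  have htn : ((v.toNat : ℕ) : ℤ) = v := Int.toNat_of_nonneg (by omega)
  have hdvdj : v ∣ j^2+j+1 := ⟨w, hvw.symm⟩
  set j₀ := j % v with hj0def
  have hj00 : 0 ≤ j₀ := Int.emod_nonneg j hvne
  have hj0v : j₀ < v := Int.emod_lt_of_pos j hv0
  have hjj0 : v ∣ j - j₀ := Int.dvd_self_sub_of_emod_eq rfl
  have hdvd0 : v ∣ j₀^2+j₀+1 := by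
    have e : j₀^2+j₀+1 = (j^2+j+1) - (j-j₀)*(j+j₀+1) := by ring
    rw [e]; exact dvd_sub hdvdj (Dvd.dvd.mul_right hjj0 _)
  have hrep := repF_spec v.toNat j₀ (by omega) (by rw [htn]; exact hdvd0)
  set a := (repF v.toNat j₀).1 with hadef
  set b := (repF v.toNat j₀).2 with hbdef
  obtain ⟨hcop, hnorm, hdvdba⟩ := hrep
  rw [htn] at hnorm
  set q := j / v with hqdef
  have hPhi : Phi p = (a, b, q, if 0 ≤ p.1 then 0 else 1) := rfl
  have hab2v : a^2 + b^2 ≤ 2*v := by nlinarith [sq_nonneg (a+b)]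
  have h3ab : 2*v ≤ 3*(a^2+b^2) := by nlinarith [sq_nonneg (a-b)]
  have hv2k : v ≤ 2*(k:ℤ)+1 := le_trans hvw' hw2k
  have ha2 : a^2 ≤ ((8*k+4 : ℕ) : ℤ) := by push_cast; nlinarith [sq_nonneg b]
  have hb2 : b^2 ≤ ((8*k+4 : ℕ) : ℤ) := by push_cast; nlinarith [sq_nonneg a]
  have haL : a.natAbs ≤ L := natAbs_le_sqrt a (8*k+4) ha2
  have hbL : b.natAbs ≤ L := natAbs_le_sqrt b (8*k+4) hb2
  -- bound on q
  have hde : v * q + j₀ = j := Int.mul_ediv_add_emod j v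
  set T : ℤ := (q.natAbs : ℤ) - 1 with hTdef
  have hTm1 : -1 ≤ T := by omega
  have hJ : (0:ℤ) ≤ (j.natAbs : ℤ) := Int.natCast_nonneg _
  have hTv : 1 ≤ T → T*v ≤ (j.natAbs:ℤ) ∧ 1 ≤ (j.natAbs:ℤ) := by
    intro hT
    rcases lt_trichotomy q 0 with hq | hq | hq
    · have hqa : (q.natAbs : ℤ) = -q := by omega
      have hTq : T = -q - 1 := by omega
      have hjneg : j ≤ -1 := by nlinarith
      have hja : (j.natAbs : ℤ) = -j := by omega
      constructor
      · rw [hTq, hja]; nlinarith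
      · omega
    · exfalso; omega
    · have hqa : (q.natAbs : ℤ) = q := by omega
      have hTq : T = q - 1 := by omega
      have hjpos : 1 ≤ j := by nlinarith
      have hja : (j.natAbs : ℤ) = j := by omega
      constructor
      · rw [hTq, hja]; nlinarith
      · omega
  have hT2v : 1 ≤ T → T^2 * v ≤ 4*(k:ℤ)+2 := by
    intro hT
    obtain ⟨hTv1, hJ1⟩ := hTv hT
    have hJ2 : (j.natAbs:ℤ)^2 = j^2 := by
      have h5 := Int.natAbs_mul_self' j
      rw [pow_two, pow_two]; exact h5
    have hsq : (2*(j.natAbs:ℤ)-1)^2 ≤ 4*(v*w) :=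
      Jsq_helper j (j.natAbs:ℤ) v w hJ2 (by omega) hvw
    exact qbound_helper T v w k (j.natAbs:ℤ) hT hv1 hTv1 hJ1 hsq hw2k (Int.natCast_nonneg k)
  rw [hPhi, USet, Finset.mem_filter]
  have hT8 : 1 ≤ T → T.natAbs ≤ L := fun hT => by
    have h6 := hT2v hT
    have hT2 : T^2 ≤ ((8*k+4:ℕ):ℤ) := by
      have h7 := Tsq_le T v (k:ℤ) h6 hv1 (Int.natCast_nonneg k)
      push_cast
      linarith
    exact natAbs_le_sqrt T (8*k+4) hT2
  constructor
  · simp only [Finset.mem_product, Finset.mem_Icc]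
    refine ⟨⟨?_, ?_⟩, ⟨?_, ?_⟩, ⟨?_, ?_⟩, ?_, ?_⟩
    · omega
    · omega
    · omega
    · omega
    · rcases le_or_gt 1 T with hT | hT
      · have := hT8 hT; omega
      · omega
    · rcases le_or_gt 1 T with hT | hT
      · have := hT8 hT; omega
      · omega
    · split <;> omega
    · split <;> omega
  · constructor
    · show ((q.natAbs : ℤ) - 1)^2 * (a^2 + b^2) ≤ 8*(k:ℤ)+4
      rw [← hTdef]
      rcases le_or_gt 1 T with hT | hT
      · exact filter_helper1 T v (a^2+b^2) (k:ℤ) (hT2v hT) hab2v (by positivity)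
      · have hTsq : T^2 ≤ 1 := by
          have h01 : T = -1 ∨ T = 0 := by omega
          rcases h01 with h | h <;> rw [h] <;> norm_num
        exact filter_helper2 T v (a^2+b^2) (k:ℤ) hTsq hab2v (by positivity) hv2k hv1
          (Int.natCast_nonneg k)
    · show (1:ℤ) ≤ a^2 + b^2
      omega

lemma phi_inj (k : ℕ) (p p' : ℤ×ℤ×ℤ)
    (h1 : p.1 ≤ p.2.1) (h2 : p.2.1 ≤ p.2.2) (h3 : F3 p.1 p.2.1 p.2.2 = 0)
    (h4 : p.1^2+p.2.1^2+p.2.2^2 ≤ (k:ℤ)^2)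
    (h1' : p'.1 ≤ p'.2.1) (h2' : p'.2.1 ≤ p'.2.2) (h3' : F3 p'.1 p'.2.1 p'.2.2 = 0)
    (h4' : p'.1^2+p'.2.1^2+p'.2.2^2 ≤ (k:ℤ)^2)
    (heq : Phi p = Phi p') : p = p' := by
  obtain ⟨w, hv1, hvw', hw2k, hvw, hcase⟩ := sol_struct k p h1 h2 h3 h4
  obtain ⟨w2, hv1', hvw2', hw2k', hvw2, hcase'⟩ := sol_struct k p' h1' h2' h3' h4'
  set v := vSel p with hvdef
  set j := jSel p with hjdef
  set v' := vSel p' with hvdef'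
  set j' := jSel p' with hjdef'
  have hvne : v ≠ 0 := by omega
  have hvne' : v' ≠ 0 := by omega
  have htn : ((v.toNat : ℕ) : ℤ) = v := Int.toNat_of_nonneg (by omega)
  have htn' : ((v'.toNat : ℕ) : ℤ) = v' := Int.toNat_of_nonneg (by omega)
  have hdvdj : v ∣ j^2+j+1 := ⟨w, hvw.symm⟩
  have hdvdj' : v' ∣ j'^2+j'+1 := ⟨w2, hvw2.symm⟩
  set j₀ := j % v with hj0def
  set j₀' := j' % v' with hj0def'
  have hj00 : 0 ≤ j₀ := Int.emod_nonneg j hvne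
  have hj0v : j₀ < v := Int.emod_lt_of_pos j (by omega)
  have hj00' : 0 ≤ j₀' := Int.emod_nonneg j' hvne'
  have hj0v' : j₀' < v' := Int.emod_lt_of_pos j' (by omega)
  have hdvd0 : v ∣ j₀^2+j₀+1 := by
    have hjj0 : v ∣ j - j₀ := Int.dvd_self_sub_of_emod_eq rfl
    have e : j₀^2+j₀+1 = (j^2+j+1) - (j-j₀)*(j+j₀+1) := by ring
    rw [e]; exact dvd_sub hdvdj (Dvd.dvd.mul_right hjj0 _)
  have hdvd0' : v' ∣ j₀'^2+j₀'+1 := by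
    have hjj0 : v' ∣ j' - j₀' := Int.dvd_self_sub_of_emod_eq rfl
    have e : j₀'^2+j₀'+1 = (j'^2+j'+1) - (j'-j₀')*(j'+j₀'+1) := by ring
    rw [e]; exact dvd_sub hdvdj' (Dvd.dvd.mul_right hjj0 _)
  obtain ⟨hcop, hnorm, hdvdba⟩ := repF_spec v.toNat j₀ (by omega) (by rw [htn]; exact hdvd0)
  obtain ⟨hcop', hnorm', hdvdba'⟩ :=
    repF_spec v'.toNat j₀' (by omega) (by rw [htn']; exact hdvd0')
  rw [htn] at hnorm hdvdba
  rw [htn'] at hnorm' hdvdba'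
  set a := (repF v.toNat j₀).1 with hadef
  set b := (repF v.toNat j₀).2 with hbdef
  set a' := (repF v'.toNat j₀').1 with hadef'
  set b' := (repF v'.toNat j₀').2 with hbdef'
  have hPhi : Phi p = (a, b, j / v, if 0 ≤ p.1 then (0:ℤ) else 1) := rfl
  have hPhi' : Phi p' = (a', b', j' / v', if 0 ≤ p'.1 then (0:ℤ) else 1) := rfl
  rw [hPhi, hPhi', Prod.mk.injEq, Prod.mk.injEq, Prod.mk.injEq] at heq
  obtain ⟨hA, hB, hQ, hE⟩ := heq
  rw [← hA, ← hB] at hnorm' hdvdba' hcop'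
  have hVV : v = v' := by rw [← hnorm, ← hnorm']
  -- j₀ = j₀'
  have hsub : v ∣ (j₀ - j₀') * b := by
    have e : (j₀ - j₀')*b = (j₀*b - a) - (j₀'*b - a) := by ring
    rw [e]
    exact dvd_sub hdvdba (hVV ▸ hdvdba')
  have hvb : IsCoprime v b := by
    have hba2 : IsCoprime b (a^2) := (hcop.symm).pow_right
    have h := (hba2.add_mul_left_right (a+b)).symm
    have hveq2 : a^2 + b*(a+b) = v := by linear_combination hnorm
    rwa [hveq2] at h
  have hj0dvd : v ∣ j₀ - j₀' := hvb.dvd_of_dvd_mul_right hsub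
  have hj0eq : j₀ = j₀' := by
    have h5 := Int.eq_zero_of_dvd_of_natAbs_lt_natAbs hj0dvd (by omega)
    omega
  have hJJ : j = j' := by
    have hde : v * (j / v) + j₀ = j := Int.mul_ediv_add_emod j v
    have hde' : v' * (j' / v') + j₀' = j' := Int.mul_ediv_add_emod j' v'
    rw [← hde, ← hde', hQ, hVV, hj0eq]
  have hWW : w = w2 := by
    have h5 : v * w = v * w2 := by rw [hvw, hJJ, hVV]; exact hvw2.symm
    exact mul_left_cancel₀ hvne h5
  have hz : p.2.2 = j + p.1 + p.2.1 + 1 := by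
    have : j = p.2.2 - p.1 - p.2.1 - 1 := rfl
    omega
  have hz' : p'.2.2 = j' + p'.1 + p'.2.1 + 1 := by
    have : j' = p'.2.2 - p'.1 - p'.2.1 - 1 := rfl
    omega
  rcases hcase with ⟨hx, hvx, hwx⟩ | ⟨hx, hvx, hwx⟩ <;>
    rcases hcase' with ⟨hx', hvx', hwx'⟩ | ⟨hx', hvx', hwx'⟩
  · have e1 : p.1 = p'.1 := by omega
    have e2 : p.2.1 = p'.2.1 := by omega
    have e3 : p.2.2 = p'.2.2 := by omega
    exact Prod.ext e1 (Prod.ext e2 e3)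
  · exfalso; rw [if_pos hx, if_neg hx'] at hE; norm_num at hE
  · exfalso; rw [if_neg hx, if_pos hx'] at hE; norm_num at hE
  · have e2 : p.2.1 = p'.2.1 := by omega
    have e1 : p.1 = p'.1 := by omega
    have e3 : p.2.2 = p'.2.2 := by omega
    exact Prod.ext e1 (Prod.ext e2 e3)


noncomputable def VSet (k L : ℕ) : Finset (ℤ×ℤ×ℕ×ℤ) :=
  ((Finset.Icc (-(L:ℤ)) L) ×ˢ (Finset.Icc (-(L:ℤ)) L) ×ˢ
    (Finset.range (L+3)) ×ˢ (Finset.Icc (0:ℤ) 1)).filter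
    (fun t => ((t.2.2.1 : ℤ) - 1)^2 * (t.1^2 + t.2.1^2) ≤ 8*(k:ℤ)+4)

def absq (t : ℤ×ℤ×ℤ×ℤ) : ℤ×ℤ×ℕ×ℤ := (t.1, t.2.1, t.2.2.1.natAbs, t.2.2.2)

lemma USet_le_VSet (k L : ℕ) : (USet k L).card ≤ 2 * (VSet k L).card := by
  classical
  have h1 : (USet k L).card ≤ 2 * ((USet k L).image absq).card := by
    apply Finset.card_le_mul_card_image
    intro y hy
    have hsub : (USet k L).filter (fun x => absq x = y) ⊆
        {(y.1, y.2.1, (y.2.2.1 : ℤ), y.2.2.2), (y.1, y.2.1, -(y.2.2.1 : ℤ), y.2.2.2)} := by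
      intro t ht
      rw [Finset.mem_filter] at ht
      obtain ⟨htU, ht2⟩ := ht
      subst ht2
      simp only [Finset.mem_insert, Finset.mem_singleton, absq]
      rcases Int.natAbs_eq t.2.2.1 with h | h
      · left; exact Prod.ext rfl (Prod.ext rfl (Prod.ext h rfl))
      · right; exact Prod.ext rfl (Prod.ext rfl (Prod.ext h rfl))
    calc ((USet k L).filter (fun x => absq x = y)).card
        ≤ ({(y.1, y.2.1, (y.2.2.1 : ℤ), y.2.2.2), (y.1, y.2.1, -(y.2.2.1 : ℤ), y.2.2.2)} :
            Finset (ℤ×ℤ×ℤ×ℤ)).card := Finset.card_le_card hsub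
    _ ≤ 2 := (Finset.card_insert_le _ _).trans (by simp)
  have h2 : (USet k L).image absq ⊆ VSet k L := by
    intro y hy
    rw [Finset.mem_image] at hy
    obtain ⟨t, ht, hty⟩ := hy
    rw [USet, Finset.mem_filter] at ht
    obtain ⟨hprod, hf1, hf2⟩ := ht
    simp only [Finset.mem_product, Finset.mem_Icc] at hprod
    obtain ⟨hp1, hp2, hp3, hp4⟩ := hprod
    rw [VSet, Finset.mem_filter, ← hty]
    constructor
    · simp only [Finset.mem_product, Finset.mem_Icc, Finset.mem_range, absq]
      refine ⟨hp1, hp2, by omega, hp4⟩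
    · simp only [absq]
      exact hf1
  calc (USet k L).card ≤ 2 * ((USet k L).image absq).card := h1
  _ ≤ 2 * (VSet k L).card := by
      have := Finset.card_le_card h2
      omega

lemma Abound (L q : ℕ) (hL : 1 ≤ L) :
    ((2*(if q ≤ 1 then L else L/(q-1))+1 : ℕ) : ℚ)^2
      ≤ 36*(L:ℚ)^2*(1/(((q:ℚ)+1)^2)) + 4*(L:ℚ) + 1 := by
  have hLQ : (1:ℚ) ≤ (L:ℚ) := by exact_mod_cast hL
  split
  · rename_i hq
    have hq2 : ((q:ℚ)+1) ≤ 2 := by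
      have : (q:ℚ) ≤ 1 := by exact_mod_cast hq
      linarith
    have hq0 : (0:ℚ) < (q:ℚ)+1 := by positivity
    have h14 : (1:ℚ)/4 ≤ 1/(((q:ℚ)+1)^2) := by
      rw [div_le_div_iff₀ (by norm_num) (by positivity)]
      nlinarith
    have hexp : ((2*L+1 : ℕ) : ℚ) = 2*(L:ℚ)+1 := by push_cast; ring
    rw [hexp]
    have h9 : (2*(L:ℚ)+1)^2 ≤ 9*(L:ℚ)^2 := by nlinarith
    have h36 : 9*(L:ℚ)^2 ≤ 36*(L:ℚ)^2*(1/(((q:ℚ)+1)^2)) := by nlinarith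
    nlinarith
  · rename_i hq
    push_neg at hq
    set A := L/(q-1) with hAdef
    have hAq : A * (q-1) ≤ L := Nat.div_mul_le_self L (q-1)
    set x := (q:ℚ) with hxdef
    have hx2 : (2:ℚ) ≤ x := by rw [hxdef]; exact_mod_cast hq
    have ha0 : (0:ℚ) ≤ (A:ℚ) := Nat.cast_nonneg A
    have haxL : (A:ℚ) * (x-1) ≤ (L:ℚ) := by
      have hcast : ((A * (q-1) : ℕ) : ℚ) ≤ (L:ℚ) := by exact_mod_cast hAq
      have : ((q-1 : ℕ) : ℚ) = x - 1 := by
        rw [hxdef]; push_cast [Nat.cast_sub (by omega : 1 ≤ q)]; ring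
      rw [Nat.cast_mul, this] at hcast
      exact hcast
    have hx10 : (0:ℚ) < x - 1 := by linarith
    have hx30 : (0:ℚ) < x + 1 := by linarith
    have h3L : (A:ℚ)*(x+1) ≤ 3*(L:ℚ) := by nlinarith
    have h4a2 : 4*(A:ℚ)^2 ≤ 36*(L:ℚ)^2*(1/((x+1)^2)) := by
      rw [mul_one_div, le_div_iff₀ (by positivity)]
      nlinarith [mul_le_mul h3L h3L (by positivity : (0:ℚ) ≤ (A:ℚ)*(x+1)) (by positivity : (0:ℚ) ≤ 3*(L:ℚ))]
    have h4a : 4*(A:ℚ) ≤ 4*(L:ℚ) := by nlinarith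
    have hexp : ((2*A+1 : ℕ) : ℚ) = 2*(A:ℚ)+1 := by push_cast; ring
    rw [hexp]
    nlinarith

lemma VSet_card (k L : ℕ) (hL : 1 ≤ L)
    (hLk : ∀ c : ℤ, c^2 ≤ 8*(k:ℤ)+4 → c.natAbs ≤ L) :
    (VSet k L).card ≤ 184 * L^2 := by
  classical
  set A : ℕ → ℕ := fun q => if q ≤ 1 then L else L/(q-1) with hAdef
  have hfib : ∀ x ∈ VSet k L, x.2.2.1 ∈ Finset.range (L+3) := by
    intro x hx
    rw [VSet, Finset.mem_filter] at hx
    have := hx.1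
    simp only [Finset.mem_product] at this
    exact this.2.2.1
  rw [Finset.card_eq_sum_card_fiberwise hfib]
  have hper : ∀ q ∈ Finset.range (L+3),
      ((VSet k L).filter (fun x => x.2.2.1 = q)).card ≤ 2*(2*(A q)+1)^2 := by
    intro q hq
    have hsub : (VSet k L).filter (fun x => x.2.2.1 = q) ⊆
        (Finset.Icc (-(A q : ℤ)) (A q)) ×ˢ (Finset.Icc (-(A q : ℤ)) (A q)) ×ˢ
          ({q} : Finset ℕ) ×ˢ (Finset.Icc (0:ℤ) 1) := by
      intro t ht
      rw [Finset.mem_filter, VSet, Finset.mem_filter] at ht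
      obtain ⟨⟨hprod, hfil⟩, htq⟩ := ht
      simp only [Finset.mem_product, Finset.mem_Icc, Finset.mem_range] at hprod
      obtain ⟨⟨hp1a, hp1b⟩, ⟨hp2a, hp2b⟩, hp3, hp4⟩ := hprod
      simp only [Finset.mem_product, Finset.mem_Icc, Finset.mem_singleton]
      simp only [hAdef]
      split
      · exact ⟨⟨hp1a, hp1b⟩, ⟨hp2a, hp2b⟩, htq, hp4⟩
      · rename_i hq2
        push_neg at hq2
        rw [htq] at hfil
        have hkey : ∀ c : ℤ, ((q:ℤ)-1)^2 * (t.1^2 + t.2.1^2) ≤ 8*(k:ℤ)+4 →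
            c^2 ≤ t.1^2 + t.2.1^2 → c.natAbs ≤ L / (q-1) := by
          intro c hc hcsq
          have h1 : (((q:ℤ)-1)*c)^2 ≤ 8*(k:ℤ)+4 := by nlinarith [sq_nonneg ((q:ℤ)-1)]
          have h2 := hLk (((q:ℤ)-1)*c) h1
          have h3 : (((q:ℤ)-1)*c).natAbs = (q-1) * c.natAbs := by
            rw [Int.natAbs_mul]
            congr 1
            omega
          rw [h3] at h2
          rw [Nat.le_div_iff_mul_le (by omega : 0 < q - 1), Nat.mul_comm]
          exact h2
        have hb1 := hkey t.1 hfil (by nlinarith [sq_nonneg t.2.1])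
        have hb2 := hkey t.2.1 hfil (by nlinarith [sq_nonneg t.1])
        refine ⟨⟨?_, ?_⟩, ⟨?_, ?_⟩, htq, hp4⟩ <;> omega
    calc ((VSet k L).filter (fun x => x.2.2.1 = q)).card
        ≤ _ := Finset.card_le_card hsub
    _ ≤ 2*(2*(A q)+1)^2 := by
        rw [Finset.card_product, Finset.card_product, Finset.card_product,
          Finset.card_singleton, Int.card_Icc, Int.card_Icc]
        have e1 : ((A q : ℤ) + 1 - (-(A q : ℤ))).toNat = 2*(A q)+1 := by omega
        rw [e1]
        have e2 : ((1:ℤ) + 1 - 0).toNat = 2 := rfl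
        rw [e2]
        ring_nf
        nlinarith [Nat.zero_le (A q)]
  calc ∑ q ∈ Finset.range (L+3), ((VSet k L).filter (fun x => x.2.2.1 = q)).card
      ≤ ∑ q ∈ Finset.range (L+3), 2*(2*(A q)+1)^2 := Finset.sum_le_sum hper
  _ ≤ 184 * L^2 := by
      have hQ : ((∑ q ∈ Finset.range (L+3), 2*(2*(A q)+1)^2 : ℕ) : ℚ) ≤ 184 * (L:ℚ)^2 := by
        rw [Nat.cast_sum]
        have hterm : ∀ q ∈ Finset.range (L+3),
            ((2*(2*(A q)+1)^2 : ℕ) : ℚ) ≤ 2*(36*(L:ℚ)^2*(1/(((q:ℚ)+1)^2)) + 4*(L:ℚ) + 1) := by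
          intro q hq
          have h := Abound L q hL
          have hAq : (if q ≤ 1 then L else L/(q-1)) = A q := by simp [hAdef]
          rw [hAq] at h
          have e : ((2*(2*(A q)+1)^2 : ℕ) : ℚ) = 2*(((2*(A q)+1 : ℕ)):ℚ)^2 := by
            push_cast; ring
          rw [e]
          linarith
        calc ∑ q ∈ Finset.range (L+3), ((2*(2*(A q)+1)^2 : ℕ) : ℚ)
            ≤ ∑ q ∈ Finset.range (L+3),
              2*(36*(L:ℚ)^2*(1/(((q:ℚ)+1)^2)) + 4*(L:ℚ) + 1) := Finset.sum_le_sum hterm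
        _ = ∑ q ∈ Finset.range (L+3),
              (72*(L:ℚ)^2*(1/(((q:ℚ)+1)^2)) + (8*(L:ℚ)+2)) :=
            Finset.sum_congr rfl (fun q _ => by ring)
        _ = 72*(L:ℚ)^2 * (∑ q ∈ Finset.range (L+3), (1:ℚ)/(((q:ℚ)+1)^2))
              + (8*(L:ℚ)+2)*((L:ℚ)+3) := by
            rw [Finset.sum_add_distrib, ← Finset.mul_sum, Finset.sum_const, Finset.card_range]
            push_cast; ring
        _ ≤ 72*(L:ℚ)^2 * 2 + (8*(L:ℚ)+2)*((L:ℚ)+3) := by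
            have hs := sum_inv_sq_range' (L+3)
            have hLQ0 : (0:ℚ) ≤ (L:ℚ)^2 := by positivity
            nlinarith [hs]
        _ ≤ 184 * (L:ℚ)^2 := by
            have hLQ : (1:ℚ) ≤ (L:ℚ) := by exact_mod_cast hL
            nlinarith
      exact_mod_cast hQ


lemma upper_bound (k : ℕ) (hk : 400 ≤ k) :
    ({x : ℤ×ℤ×ℤ | x.1 ≤ x.2.1 ∧ x.2.1 ≤ x.2.2 ∧ F3 x.1 x.2.1 x.2.2 = 0 ∧
      x.1^2+x.2.1^2+x.2.2^2 ≤ (k:ℤ)^2}).ncard ≤ 3000 * k := by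
  classical
  set S := {x : ℤ×ℤ×ℤ | x.1 ≤ x.2.1 ∧ x.2.1 ≤ x.2.2 ∧ F3 x.1 x.2.1 x.2.2 = 0 ∧
      x.1^2+x.2.1^2+x.2.2^2 ≤ (k:ℤ)^2} with hSdef
  set L := Nat.sqrt (8*k+4) with hLdef
  have hL1 : 1 ≤ L := Nat.le_sqrt'.mpr (by omega)
  have hLk : ∀ c : ℤ, c^2 ≤ 8*(k:ℤ)+4 → c.natAbs ≤ L := by
    intro c hc
    apply natAbs_le_sqrt c (8*k+4)
    push_cast
    exact hc
  have hmem : ∀ p ∈ S, Phi p ∈ (↑(USet k L) : Set (ℤ×ℤ×ℤ×ℤ)) := by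
    intro p hp
    obtain ⟨hp1, hp2, hp3, hp4⟩ := hp
    exact phi_mem k (by omega) p hp1 hp2 hp3 hp4
  have hinj : Set.InjOn Phi S := by
    intro p hp p' hp' heq
    obtain ⟨hp1, hp2, hp3, hp4⟩ := hp
    obtain ⟨hq1, hq2, hq3, hq4⟩ := hp'
    exact phi_inj k p p' hp1 hp2 hp3 hp4 hq1 hq2 hq3 hq4 heq
  have hn1 : S.ncard ≤ (USet k L).card := by
    have h := Set.ncard_le_ncard_of_injOn Phi hmem hinj (Finset.finite_toSet _)
    rwa [Set.ncard_coe_finset] at h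
  have hn2 : (USet k L).card ≤ 2 * (VSet k L).card := USet_le_VSet k L
  have hn3 : (VSet k L).card ≤ 184 * L^2 := VSet_card k L hL1 hLk
  have hL2 : L^2 ≤ 8*k+4 := Nat.sqrt_le' (8*k+4)
  omega

/-- The number of solutions of `F_3 = 0` (up to permutation, i.e. ascending triples)
of Euclidean norm at most `k` is `Θ(k)`, and likewise for the 3-color fair games. -/
theorem stmt_18 :
    (∃ c1 c2 : ℝ, 0 < c1 ∧ 0 < c2 ∧ ∃ K : ℕ, ∀ k : ℕ, K ≤ k →
      c1 * k ≤ ({x : ℤ × ℤ × ℤ | x.1 ≤ x.2.1 ∧ x.2.1 ≤ x.2.2 ∧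
          F3 x.1 x.2.1 x.2.2 = 0 ∧
          x.1 ^ 2 + x.2.1 ^ 2 + x.2.2 ^ 2 ≤ (k : ℤ) ^ 2}.ncard : ℝ) ∧
        ({x : ℤ × ℤ × ℤ | x.1 ≤ x.2.1 ∧ x.2.1 ≤ x.2.2 ∧
          F3 x.1 x.2.1 x.2.2 = 0 ∧
          x.1 ^ 2 + x.2.1 ^ 2 + x.2.2 ^ 2 ≤ (k : ℤ) ^ 2}.ncard : ℝ) ≤ c2 * k) ∧
    (∃ c1 c2 : ℝ, 0 < c1 ∧ 0 < c2 ∧ ∃ K : ℕ, ∀ k : ℕ, K ≤ k →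
      c1 * k ≤ ({x : ℤ × ℤ × ℤ | 0 ≤ x.1 ∧ x.1 ≤ x.2.1 ∧ x.2.1 ≤ x.2.2 ∧
          F3 x.1 x.2.1 x.2.2 = 0 ∧
          x.1 ^ 2 + x.2.1 ^ 2 + x.2.2 ^ 2 ≤ (k : ℤ) ^ 2}.ncard : ℝ) ∧
        ({x : ℤ × ℤ × ℤ | 0 ≤ x.1 ∧ x.1 ≤ x.2.1 ∧ x.2.1 ≤ x.2.2 ∧
          F3 x.1 x.2.1 x.2.2 = 0 ∧
          x.1 ^ 2 + x.2.1 ^ 2 + x.2.2 ^ 2 ≤ (k : ℤ) ^ 2}.ncard : ℝ) ≤ c2 * k) := by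
  constructor
  · refine ⟨1/1600, 3000, by norm_num, by norm_num, 6400, ?_⟩
    intro k hk
    have hl := lower_bound k hk
    have hu := upper_bound k (by omega)
    have hsub : {x : ℤ × ℤ × ℤ | 0 ≤ x.1 ∧ x.1 ≤ x.2.1 ∧ x.2.1 ≤ x.2.2 ∧
          F3 x.1 x.2.1 x.2.2 = 0 ∧
          x.1 ^ 2 + x.2.1 ^ 2 + x.2.2 ^ 2 ≤ (k : ℤ) ^ 2} ⊆
        {x : ℤ × ℤ × ℤ | x.1 ≤ x.2.1 ∧ x.2.1 ≤ x.2.2 ∧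
          F3 x.1 x.2.1 x.2.2 = 0 ∧
          x.1 ^ 2 + x.2.1 ^ 2 + x.2.2 ^ 2 ≤ (k : ℤ) ^ 2} :=
      fun x hx => ⟨hx.2.1, hx.2.2.1, hx.2.2.2.1, hx.2.2.2.2⟩
    have hfin : ({x : ℤ × ℤ × ℤ | x.1 ≤ x.2.1 ∧ x.2.1 ≤ x.2.2 ∧
          F3 x.1 x.2.1 x.2.2 = 0 ∧
          x.1 ^ 2 + x.2.1 ^ 2 + x.2.2 ^ 2 ≤ (k : ℤ) ^ 2}).Finite :=
      sol_finite k _ (fun p hp => hp.2.2.2)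
    have hle := Set.ncard_le_ncard hsub hfin
    constructor
    · have h1 : k ≤ 1600 * ({x : ℤ × ℤ × ℤ | x.1 ≤ x.2.1 ∧ x.2.1 ≤ x.2.2 ∧
          F3 x.1 x.2.1 x.2.2 = 0 ∧
          x.1 ^ 2 + x.2.1 ^ 2 + x.2.2 ^ 2 ≤ (k : ℤ) ^ 2}).ncard := by omega
      have h2 : (k:ℝ) ≤ 1600 * ({x : ℤ × ℤ × ℤ | x.1 ≤ x.2.1 ∧ x.2.1 ≤ x.2.2 ∧
          F3 x.1 x.2.1 x.2.2 = 0 ∧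
          x.1 ^ 2 + x.2.1 ^ 2 + x.2.2 ^ 2 ≤ (k : ℤ) ^ 2}).ncard := by exact_mod_cast h1
      linarith
    · have h2 : (({x : ℤ × ℤ × ℤ | x.1 ≤ x.2.1 ∧ x.2.1 ≤ x.2.2 ∧
          F3 x.1 x.2.1 x.2.2 = 0 ∧
          x.1 ^ 2 + x.2.1 ^ 2 + x.2.2 ^ 2 ≤ (k : ℤ) ^ 2}).ncard : ℝ) ≤ 3000 * k := by
        exact_mod_cast hu
      linarith
  · refine ⟨1/1600, 3000, by norm_num, by norm_num, 6400, ?_⟩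
    intro k hk
    have hl := lower_bound k hk
    have hu := upper_bound k (by omega)
    have hsub : {x : ℤ × ℤ × ℤ | 0 ≤ x.1 ∧ x.1 ≤ x.2.1 ∧ x.2.1 ≤ x.2.2 ∧
          F3 x.1 x.2.1 x.2.2 = 0 ∧
          x.1 ^ 2 + x.2.1 ^ 2 + x.2.2 ^ 2 ≤ (k : ℤ) ^ 2} ⊆
        {x : ℤ × ℤ × ℤ | x.1 ≤ x.2.1 ∧ x.2.1 ≤ x.2.2 ∧
          F3 x.1 x.2.1 x.2.2 = 0 ∧
          x.1 ^ 2 + x.2.1 ^ 2 + x.2.2 ^ 2 ≤ (k : ℤ) ^ 2} :=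
      fun x hx => ⟨hx.2.1, hx.2.2.1, hx.2.2.2.1, hx.2.2.2.2⟩
    have hfin : ({x : ℤ × ℤ × ℤ | x.1 ≤ x.2.1 ∧ x.2.1 ≤ x.2.2 ∧
          F3 x.1 x.2.1 x.2.2 = 0 ∧
          x.1 ^ 2 + x.2.1 ^ 2 + x.2.2 ^ 2 ≤ (k : ℤ) ^ 2}).Finite :=
      sol_finite k _ (fun p hp => hp.2.2.2)
    have hle := Set.ncard_le_ncard hsub hfin
    constructor
    · have h2 : (k:ℝ) ≤ 1600 * ({x : ℤ × ℤ × ℤ | 0 ≤ x.1 ∧ x.1 ≤ x.2.1 ∧ x.2.1 ≤ x.2.2 ∧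
          F3 x.1 x.2.1 x.2.2 = 0 ∧
          x.1 ^ 2 + x.2.1 ^ 2 + x.2.2 ^ 2 ≤ (k : ℤ) ^ 2}).ncard := by exact_mod_cast hl
      linarith
    · have h1 : ({x : ℤ × ℤ × ℤ | 0 ≤ x.1 ∧ x.1 ≤ x.2.1 ∧ x.2.1 ≤ x.2.2 ∧
          F3 x.1 x.2.1 x.2.2 = 0 ∧
          x.1 ^ 2 + x.2.1 ^ 2 + x.2.2 ^ 2 ≤ (k : ℤ) ^ 2}).ncard ≤ 3000 * k := by omega
      have h2 : (({x : ℤ × ℤ × ℤ | 0 ≤ x.1 ∧ x.1 ≤ x.2.1 ∧ x.2.1 ≤ x.2.2 ∧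
          F3 x.1 x.2.1 x.2.2 = 0 ∧
          x.1 ^ 2 + x.2.1 ^ 2 + x.2.2 ^ 2 ≤ (k : ℤ) ^ 2}).ncard : ℝ) ≤ 3000 * k := by
        exact_mod_cast h1
      linarith
end

section
/- Define sequences (f_i) and (m_i) by f_0 = f_1 = 1, f_{i+2} = f_i + f_{i+1}, and m_0 = 0, m_1 = 1, m_2 = 3, m_{i+3} = 2(m_{i+1} + m_{i+2}) + 1 − m_i. Then for every k ≥ 0: m_k = f_k^2 if k is odd, and m_k = f_k^2 − 1 if k is even. -/
/-- With `f` the Fibonacci sequence (`f₀ = f₁ = 1`) and `m` the sequence of maximal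
coordinates of 3-color fair games (`m₀ = 0`, `m₁ = 1`, `m₂ = 3`,
`m_{i+3} = 2(m_{i+1} + m_{i+2}) + 1 − m_i`), we have `m_k = f_k²` for odd `k` and
`m_k = f_k² − 1` for even `k`. -/
theorem stmt_19 (f m : ℕ → ℤ)
    (hf0 : f 0 = 1) (hf1 : f 1 = 1) (hf : ∀ i, f (i + 2) = f i + f (i + 1))
    (hm0 : m 0 = 0) (hm1 : m 1 = 1) (hm2 : m 2 = 3)
    (hm : ∀ i, m (i + 3) = 2 * (m (i + 1) + m (i + 2)) + 1 - m i) :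
    ∀ k : ℕ, (Odd k → m k = (f k) ^ 2) ∧ (Even k → m k = (f k) ^ 2 - 1) := by
  set e : ℕ → ℤ := fun k => if Even k then 1 else 0 with he
  have hfib : ∀ k, f (k + 3) ^ 2 = 2 * (f (k + 1) ^ 2 + f (k + 2) ^ 2) - f k ^ 2 := by
    intro k
    have h1 : f (k + 3) = f (k + 1) + f (k + 2) := hf (k + 1)
    have h2 : f (k + 2) = f k + f (k + 1) := hf k
    rw [h1, h2]; ring
  have key : ∀ k, m k = f k ^ 2 - e k ∧ m (k + 1) = f (k + 1) ^ 2 - e (k + 1) ∧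
      m (k + 2) = f (k + 2) ^ 2 - e (k + 2) := by
    intro k
    induction k with
    | zero =>
      have hf2 : f 2 = 2 := by rw [hf 0, hf0, hf1]; norm_num
      refine ⟨?_, ?_, ?_⟩ <;> simp [he, hm0, hm1, hm2, hf0, hf1, hf2]
    | succ n ih =>
      obtain ⟨h0, h1, h2⟩ := ih
      refine ⟨h1, h2, ?_⟩
      have hpar : ∀ j : ℕ, e j + e (j + 1) = 1 := by
        intro j
        simp only [he]
        by_cases h : Even j <;> simp [h, Nat.even_add_one]
      have hE : e (n + 3) = 1 - e n := by
        simp only [he]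
        by_cases h : Even n <;> simp [h, Nat.even_add_one, parity_simps]
      rw [hm n, h0, h1, h2, hfib n, hE]
      linarith [hpar (n + 1)]
  intro k
  obtain ⟨h0, -, -⟩ := key k
  constructor
  · intro hk
    rw [h0, he]; simp [Nat.not_even_iff_odd.mpr hk]
  · intro hk
    rw [h0, he]; simp [hk]
end
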